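/- Let (X,d) be a metric space with partial order ≼ and let S,T : X → B(X) satisfy the generalized (ψ,φ)-weak contractive condition, where ψ ∈ Υ and φ : [0,∞) → [0,∞) has property (P). Let {x_n} be a sequence in X with x_{2n+1} ∈ Sx_{2n} =: A_{2n}, x_{2n+2} ∈ Tx_{2n+1} =: A_{2n+1}, and x_{n+1} ≼ x_n for all n ≥ 0. Then {x_n} is a Cauchy sequence in (X,d). -/

import Mathlib

open Filter Topology Bornology

/-- δ(A,B) = sup{d(a,b) : a ∈ A, b ∈ B}. -/
noncomputable def setDelta {X : Type*} [MetricSpace X] (A B : Set X) : ℝ :=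
  sSup {r : ℝ | ∃ a ∈ A, ∃ b ∈ B, r = dist a b}

/-- D(A,B) = inf{d(a,b) : a ∈ A, b ∈ B}. -/
noncomputable def setInfDist {X : Type*} [MetricSpace X] (A B : Set X) : ℝ :=
  sInf {r : ℝ | ∃ a ∈ A, ∃ b ∈ B, r = dist a b}

/-- M(x,y) = max{d(x,y), δ(x,Sx), δ(y,Ty), (D(x,Ty)+D(y,Sx))/2}. -/
noncomputable def genM {X : Type*} [MetricSpace X] (S T : X → Set X) (x y : X) : ℝ :=
  max (max (dist x y) (setDelta {x} (S x)))
      (max (setDelta {y} (T y))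
        ((setInfDist {x} (T y) + setInfDist {y} (S x)) / 2))

/-- ψ ∈ Υ : ψ : [0,∞) → [0,∞) is nondecreasing and for any two nonnegative sequences with
the same limit, the sequences of ψ-values have the same limit. -/
def PsiClass (ψ : ℝ → ℝ) : Prop :=
  (∀ t, 0 ≤ t → 0 ≤ ψ t) ∧
  (∀ s t, 0 ≤ s → s ≤ t → ψ s ≤ ψ t) ∧
  (∀ (a b : ℕ → ℝ) (L la lb : ℝ), (∀ n, 0 ≤ a n) → (∀ n, 0 ≤ b n) →
    Filter.Tendsto a Filter.atTop (nhds L) → Filter.Tendsto b Filter.atTop (nhds L) →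
    Filter.Tendsto (fun n => ψ (a n)) Filter.atTop (nhds la) →
    Filter.Tendsto (fun n => ψ (b n)) Filter.atTop (nhds lb) → la = lb)

/-- Property (P) for φ : [0,∞) → [0,∞): if φ(t_n) → 0 then t_n → 0. -/
def PropP (φ : ℝ → ℝ) : Prop :=
  (∀ t, 0 ≤ t → 0 ≤ φ t) ∧
  (∀ t : ℕ → ℝ, (∀ n, 0 ≤ t n) →
    Filter.Tendsto (fun n => φ (t n)) Filter.atTop (nhds 0) →
    Filter.Tendsto t Filter.atTop (nhds 0))

namespace OrbitAux
variable {X : Type*} [MetricSpace X] {A B : Set X} {a b c c' : X} {C : ℝ}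

lemma bddAbove_distSet (hA : IsBounded A) (hB : IsBounded B) :
    BddAbove {r : ℝ | ∃ a ∈ A, ∃ b ∈ B, r = dist a b} := by
  obtain ⟨C, hC⟩ := Metric.isBounded_iff.mp (hA.union hB)
  exact ⟨C, fun r ⟨a, ha, b, hb, hr⟩ => hr ▸ hC (Set.mem_union_left _ ha) (Set.mem_union_right _ hb)⟩

lemma dist_le_setDelta (hA : IsBounded A) (hB : IsBounded B) (ha : a ∈ A) (hb : b ∈ B) :
    dist a b ≤ setDelta A B :=
  le_csSup (bddAbove_distSet hA hB) ⟨a, ha, b, hb, rfl⟩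

lemma setDelta_le (hA : A.Nonempty) (hB : B.Nonempty)
    (h : ∀ a ∈ A, ∀ b ∈ B, dist a b ≤ C) : setDelta A B ≤ C := by
  obtain ⟨a0, ha0⟩ := hA; obtain ⟨b0, hb0⟩ := hB
  exact csSup_le ⟨dist a0 b0, a0, ha0, b0, hb0, rfl⟩
    (fun r ⟨a, ha, b, hb, hr⟩ => hr ▸ h a ha b hb)

lemma setDelta_nonneg (hA : IsBounded A) (hB : IsBounded B) (ha : a ∈ A) (hb : b ∈ B) :
    0 ≤ setDelta A B :=
  dist_nonneg.trans (dist_le_setDelta hA hB ha hb)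

lemma setDelta_comm (A B : Set X) : setDelta A B = setDelta B A := by
  unfold setDelta
  congr 1
  ext r
  constructor
  · rintro ⟨a, ha, b, hb, rfl⟩; exact ⟨b, hb, a, ha, dist_comm a b ▸ rfl⟩
  · rintro ⟨b, hb, a, ha, rfl⟩; exact ⟨a, ha, b, hb, dist_comm b a ▸ rfl⟩

lemma setInfDist_le (ha : a ∈ A) (hb : b ∈ B) : setInfDist A B ≤ dist a b :=
  csInf_le ⟨0, fun r ⟨_, _, _, _, hr⟩ => hr ▸ dist_nonneg⟩ ⟨a, ha, b, hb, rfl⟩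

lemma setInfDist_nonneg (hA : A.Nonempty) (hB : B.Nonempty) : 0 ≤ setInfDist A B := by
  obtain ⟨a0, ha0⟩ := hA; obtain ⟨b0, hb0⟩ := hB
  exact le_csInf ⟨dist a0 b0, a0, ha0, b0, hb0, rfl⟩
    (fun r ⟨_, _, _, _, hr⟩ => hr ▸ dist_nonneg)

lemma dist_le_deltaSingleton (hB : IsBounded B) (hb : b ∈ B) :
    dist a b ≤ setDelta {a} B :=
  dist_le_setDelta isBounded_singleton hB rfl hb

lemma deltaSingleton_le (hB : B.Nonempty) (h : ∀ b ∈ B, dist a b ≤ C) :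
    setDelta {a} B ≤ C :=
  setDelta_le (Set.singleton_nonempty a) hB (fun a' ha' b hb => ha' ▸ h b hb)

lemma deltaSingleton_nonneg (hB : IsBounded B) (hb : b ∈ B) : 0 ≤ setDelta {a} B :=
  setDelta_nonneg isBounded_singleton hB rfl hb

lemma setDelta_le_add (hA : A.Nonempty) (hB : B.Nonempty)
    (hAb : IsBounded A) (hBb : IsBounded B) (c : X) :
    setDelta A B ≤ setDelta {c} A + setDelta {c} B := by
  refine setDelta_le hA hB (fun a ha b hb => ?_)
  calc dist a b ≤ dist a c + dist c b := dist_triangle a c b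
    _ ≤ setDelta {c} A + setDelta {c} B := by
        gcongr
        · rw [dist_comm]; exact dist_le_deltaSingleton hAb ha
        · exact dist_le_deltaSingleton hBb hb

lemma deltaSingleton_le_add (hB : B.Nonempty) (hBb : IsBounded B) (c c' : X) :
    setDelta {c} B ≤ dist c c' + setDelta {c'} B := by
  refine deltaSingleton_le hB (fun b hb => ?_)
  calc dist c b ≤ dist c c' + dist c' b := dist_triangle c c' b
    _ ≤ dist c c' + setDelta {c'} B := by gcongr; exact dist_le_deltaSingleton hBb hb

lemma deltaSingleton_le_setDelta (hB : B.Nonempty) (hAb : IsBounded A) (hBb : IsBounded B)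
    (ha : a ∈ A) : setDelta {a} B ≤ setDelta A B :=
  deltaSingleton_le hB (fun b hb => dist_le_setDelta hAb hBb ha hb)

end OrbitAux

open OrbitAux

/-- Along the alternating orbit of a generalized (ψ,φ)-weak contraction pair,
the sequence {x_n} is a Cauchy sequence. -/
theorem orbit_cauchy {X : Type*} [MetricSpace X] [PartialOrder X]
    (S T : X → Set X)
    (hS : ∀ x, (S x).Nonempty ∧ IsBounded (S x))
    (hT : ∀ x, (T x).Nonempty ∧ IsBounded (T x))
    (ψ φ : ℝ → ℝ) (hψ : PsiClass ψ) (hφ : PropP φ)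
    (hcontr : ∀ x y : X, (x ≤ y ∨ y ≤ x) →
      ψ (setDelta (S x) (T y)) ≤ ψ (genM S T x y) - φ (genM S T x y))
    (x : ℕ → X) (A : ℕ → Set X)
    (hAeven : ∀ n, A (2 * n) = S (x (2 * n)))
    (hAodd : ∀ n, A (2 * n + 1) = T (x (2 * n + 1)))
    (hxS : ∀ n, x (2 * n + 1) ∈ S (x (2 * n)))
    (hxT : ∀ n, x (2 * n + 2) ∈ T (x (2 * n + 1)))
    (hdec : ∀ n, x (n + 1) ≤ x n) :
    CauchySeq x := by
  classical
  have hAne : ∀ n, (A n).Nonempty := by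
    intro n
    obtain ⟨k, hk | hk⟩ := Nat.even_or_odd' n
    · rw [hk, hAeven]; exact (hS _).1
    · rw [hk, hAodd]; exact (hT _).1
  have hAb : ∀ n, IsBounded (A n) := by
    intro n
    obtain ⟨k, hk | hk⟩ := Nat.even_or_odd' n
    · rw [hk, hAeven]; exact (hS _).2
    · rw [hk, hAodd]; exact (hT _).2
  have hxmem : ∀ n, x (n + 1) ∈ A n := by
    intro n
    obtain ⟨k, hk | hk⟩ := Nat.even_or_odd' n
    · rw [hk, hAeven]; exact hxS k
    · rw [hk, hAodd]; exact hxT k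
  set p : ℕ → ℝ := fun n => setDelta {x n} (A n) with hp
  set e : ℕ → ℝ := fun n => dist (x n) (x (n + 1)) with he
  set d : ℕ → ℝ := fun n => setDelta (A n) (A (n + 1)) with hd
  set q : ℕ → ℝ := fun n => max (p n) (p (n + 1)) with hq
  have hp0 : ∀ n, 0 ≤ p n := fun n => deltaSingleton_nonneg (hAb n) (hxmem n)
  have hep : ∀ n, e n ≤ p n := fun n => dist_le_deltaSingleton (hAb n) (hxmem n)
  have he0 : ∀ n, 0 ≤ e n := fun _ => dist_nonneg
  have hd0 : ∀ n, 0 ≤ d n := by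
    intro n
    obtain ⟨a, ha⟩ := hAne n; obtain ⟨b, hb⟩ := hAne (n + 1)
    exact setDelta_nonneg (hAb n) (hAb (n + 1)) ha hb
  have hq0 : ∀ n, 0 ≤ q n := fun n => le_max_of_le_left (hp0 n)
  have hpd : ∀ n, p (n + 1) ≤ d n := fun n =>
    deltaSingleton_le_setDelta (hAne (n + 1)) (hAb n) (hAb (n + 1)) (hxmem n)
  have hdle : ∀ n, d n ≤ 2 * p n + p (n + 1) := by
    intro n
    have h1 : d n ≤ setDelta {x (n + 1)} (A n) + setDelta {x (n + 1)} (A (n + 1)) :=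
      setDelta_le_add (hAne n) (hAne (n + 1)) (hAb n) (hAb (n + 1)) (x (n + 1))
    have h2 : setDelta {x (n + 1)} (A n) ≤ dist (x (n + 1)) (x n) + setDelta {x n} (A n) :=
      deltaSingleton_le_add (hAne n) (hAb n) _ _
    have h3 : dist (x (n + 1)) (x n) = e n := dist_comm _ _
    have h4 := hep n
    have h5 : setDelta {x (n + 1)} (A (n + 1)) = p (n + 1) := rfl
    have h6 : setDelta {x n} (A n) = p n := rfl
    linarith [h1, h2]
  -- key contraction inequality
  have hkey : ∀ n, ψ (d n) ≤ ψ (q n) - φ (q n) := by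
    intro n
    obtain ⟨k, hk | hk⟩ := Nat.even_or_odd' n
    · subst hk
      have hSA : S (x (2 * k)) = A (2 * k) := (hAeven k).symm
      have hTA : T (x (2 * k + 1)) = A (2 * k + 1) := (hAodd k).symm
      have hM : genM S T (x (2 * k)) (x (2 * k + 1)) = q (2 * k) := by
        unfold genM
        rw [hSA, hTA]
        apply le_antisymm
        · have hA1 : dist (x (2 * k)) (x (2 * k + 1)) ≤ p (2 * k) := hep (2 * k)
          have hD1 : setInfDist {x (2 * k)} (A (2 * k + 1)) ≤ dist (x (2 * k)) (x (2 * k + 2)) :=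
            setInfDist_le rfl (hxmem (2 * k + 1))
          have hD2 : setInfDist {x (2 * k + 1)} (A (2 * k)) ≤ dist (x (2 * k + 1)) (x (2 * k + 1)) :=
            setInfDist_le rfl (hxmem (2 * k))
          have htri : dist (x (2 * k)) (x (2 * k + 2)) ≤ e (2 * k) + e (2 * k + 1) :=
            dist_triangle _ (x (2 * k + 1)) _
          have hq1 : p (2 * k) ≤ q (2 * k) := le_max_left _ _
          have hq2 : p (2 * k + 1) ≤ q (2 * k) := le_max_right _ _
          have h5 : setDelta {x (2 * k)} (A (2 * k)) = p (2 * k) := rfl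
          have h6 : setDelta {x (2 * k + 1)} (A (2 * k + 1)) = p (2 * k + 1) := rfl
          rw [h5, h6]
          apply max_le (max_le (hA1.trans hq1) hq1)
          apply max_le hq2
          have := hep (2 * k); have := hep (2 * k + 1)
          simp only [dist_self] at hD2
          linarith [hq1, hq2]
        · apply max_le
          · exact le_max_of_le_left (le_max_right _ _)
          · exact le_max_of_le_right (le_max_left _ _)
      have hc := hcontr (x (2 * k)) (x (2 * k + 1)) (Or.inr (hdec (2 * k)))
      rw [hSA, hTA, hM] at hc
      exact hc
    · subst hk
      have hSA : S (x (2 * k + 2)) = A (2 * k + 2) := by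
        have h := hAeven (k + 1)
        rw [show 2 * (k + 1) = 2 * k + 2 from by ring] at h
        exact h.symm
      have hTA : T (x (2 * k + 1)) = A (2 * k + 1) := (hAodd k).symm
      have hM : genM S T (x (2 * k + 2)) (x (2 * k + 1)) = q (2 * k + 1) := by
        unfold genM
        rw [hSA, hTA]
        apply le_antisymm
        · have hA1 : dist (x (2 * k + 2)) (x (2 * k + 1)) ≤ p (2 * k + 1) := by
            rw [dist_comm]; exact hep (2 * k + 1)
          have hD1 : setInfDist {x (2 * k + 2)} (A (2 * k + 1)) ≤
              dist (x (2 * k + 2)) (x (2 * k + 2)) :=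
            setInfDist_le rfl (hxmem (2 * k + 1))
          have hD2 : setInfDist {x (2 * k + 1)} (A (2 * k + 2)) ≤
              dist (x (2 * k + 1)) (x (2 * k + 3)) :=
            setInfDist_le rfl (hxmem (2 * k + 2))
          have htri : dist (x (2 * k + 1)) (x (2 * k + 3)) ≤ e (2 * k + 1) + e (2 * k + 2) :=
            dist_triangle _ (x (2 * k + 2)) _
          have hq1 : p (2 * k + 1) ≤ q (2 * k + 1) := le_max_left _ _
          have hq2 : p (2 * k + 2) ≤ q (2 * k + 1) := le_max_right _ _
          have h5 : setDelta {x (2 * k + 2)} (A (2 * k + 2)) = p (2 * k + 2) := rfl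
          have h6 : setDelta {x (2 * k + 1)} (A (2 * k + 1)) = p (2 * k + 1) := rfl
          rw [h5, h6]
          apply max_le (max_le (hA1.trans hq1) hq2)
          apply max_le hq1
          have := hep (2 * k + 1); have := hep (2 * k + 2)
          simp only [dist_self] at hD1
          linarith [hq1, hq2]
        · apply max_le
          · exact le_max_of_le_right (le_max_left _ _)
          · exact le_max_of_le_left (le_max_right _ _)
      have hc := hcontr (x (2 * k + 2)) (x (2 * k + 1)) (Or.inl (hdec (2 * k + 1)))
      rw [hSA, hTA, hM] at hc
      have hdd : setDelta (A (2 * k + 2)) (A (2 * k + 1)) = d (2 * k + 1) :=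
        setDelta_comm _ _
      rw [hdd] at hc
      exact hc
  -- Step 2 : d is nonincreasing, p and e tend to 0
  have hdmono : ∀ n, d (n + 1) ≤ d n := by
    intro n
    by_contra hlt
    push_neg at hlt
    have hqle : q (n + 1) ≤ d (n + 1) := max_le ((hpd n).trans hlt.le) (hpd (n + 1))
    have h1 := hkey (n + 1)
    have h2 : ψ (q (n + 1)) ≤ ψ (d (n + 1)) := hψ.2.1 _ _ (hq0 (n + 1)) hqle
    have h3 : φ (q (n + 1)) = 0 :=
      le_antisymm (by linarith) (hφ.1 _ (hq0 (n + 1)))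
    have h5 : Tendsto (fun _ : ℕ => q (n + 1)) atTop (nhds 0) :=
      hφ.2 _ (fun _ => hq0 (n + 1)) (by simpa [h3] using (tendsto_const_nhds :
        Tendsto (fun _ : ℕ => (0 : ℝ)) atTop (nhds 0)))
    have h6 : q (n + 1) = 0 := tendsto_nhds_unique tendsto_const_nhds h5
    have hp1 : p (n + 1) ≤ 0 := h6 ▸ le_max_left _ _
    have hp2 : p (n + 2) ≤ 0 := h6 ▸ le_max_right _ _
    have := hdle (n + 1)
    have := hd0 n
    linarith
  have hψd_anti : Antitone (fun n => ψ (d n)) :=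
    antitone_nat_of_succ_le (fun n => hψ.2.1 _ _ (hd0 (n + 1)) (hdmono n))
  have hψd_bdd : BddBelow (Set.range fun n => ψ (d n)) :=
    ⟨0, fun r ⟨n, hn⟩ => hn ▸ hψ.1 _ (hd0 n)⟩
  have hψd_lim : Tendsto (fun n => ψ (d n)) atTop (nhds (⨅ n, ψ (d n))) :=
    tendsto_atTop_ciInf hψd_anti hψd_bdd
  have hψd_lim' : Tendsto (fun n => ψ (d (n + 1))) atTop (nhds (⨅ n, ψ (d n))) :=
    (tendsto_add_atTop_iff_nat 1).mpr hψd_lim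
  have hφq : Tendsto (fun n => φ (q (n + 1))) atTop (nhds 0) := by
    have hub : ∀ n, φ (q (n + 1)) ≤ ψ (d n) - ψ (d (n + 1)) := by
      intro n
      have h1 := hkey (n + 1)
      have hqd : q (n + 1) ≤ d n := max_le (hpd n) ((hpd (n + 1)).trans (hdmono n))
      have h2 : ψ (q (n + 1)) ≤ ψ (d n) := hψ.2.1 _ _ (hq0 (n + 1)) hqd
      linarith
    have hlim : Tendsto (fun n => ψ (d n) - ψ (d (n + 1))) atTop (nhds 0) := by
      simpa using hψd_lim.sub hψd_lim'
    exact tendsto_of_tendsto_of_tendsto_of_le_of_le tendsto_const_nhds hlim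
      (fun n => hφ.1 _ (hq0 (n + 1))) hub
  have hq_lim : Tendsto (fun n => q (n + 1)) atTop (nhds 0) :=
    hφ.2 _ (fun n => hq0 (n + 1)) hφq
  have hp_lim : Tendsto p atTop (nhds 0) := by
    rw [← tendsto_add_atTop_iff_nat 1]
    exact tendsto_of_tendsto_of_tendsto_of_le_of_le tendsto_const_nhds hq_lim
      (fun n => hp0 (n + 1)) (fun n => le_max_left _ _)
  have he_lim : Tendsto e atTop (nhds 0) :=
    tendsto_of_tendsto_of_tendsto_of_le_of_le tendsto_const_nhds hp_lim he0 hep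
  -- composition helpers
  have hcompE : ∀ j : ℕ → ℕ, (∀ k, k ≤ j k) → Tendsto (fun k => e (j k)) atTop (nhds 0) :=
    fun j hj => he_lim.comp (tendsto_atTop_mono hj tendsto_id)
  have hcompP : ∀ j : ℕ → ℕ, (∀ k, k ≤ j k) → Tendsto (fun k => p (j k)) atTop (nhds 0) :=
    fun j hj => hp_lim.comp (tendsto_atTop_mono hj tendsto_id)
  -- chain comparability
  have hchain : ∀ i j : ℕ, i ≤ j → x j ≤ x i := by
    intro i j h
    induction j, h using Nat.le_induction with
    | base => exact le_refl _
    | succ n hn ih => exact (hdec n).trans ih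
  -- Step 3 : suppose not Cauchy
  rw [Metric.cauchySeq_iff]
  by_contra hcauchy
  push_neg at hcauchy
  obtain ⟨ε, hε, hcc⟩ := hcauchy
  set ε' : ℝ := ε / 2 with hε'def
  have hε' : 0 < ε' := by positivity
  -- e j < ε/4 for j large
  obtain ⟨K, hK⟩ : ∃ K, ∀ j ≥ K, e j < ε / 4 := by
    have := Metric.tendsto_atTop.mp he_lim (ε / 4) (by positivity)
    obtain ⟨K, hK⟩ := this
    exact ⟨K, fun j hj => by
      have := hK j hj
      rwa [Real.dist_eq, sub_zero, abs_of_nonneg (he0 j)] at this⟩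
  -- extraction of even pairs at arbitrary height
  have hpair : ∀ N : ℕ, ∃ a b : ℕ, Even a ∧ Even b ∧ N ≤ b ∧ b < a ∧
      ε' ≤ dist (x b) (x a) := by
    intro N
    obtain ⟨m, hm, n, hn, hmn⟩ := hcc (max N K)
    set m' := if Even m then m else m + 1 with hm'def
    set n' := if Even n then n else n + 1 with hn'def
    have hm'e : Even m' := by
      rw [hm'def]; split_ifs with h
      · exact h
      · exact Nat.even_add_one.mpr h
    have hn'e : Even n' := by
      rw [hn'def]; split_ifs with h
      · exact h
      · exact Nat.even_add_one.mpr h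
    have hm'ge : m ≤ m' := by rw [hm'def]; split_ifs <;> omega
    have hn'ge : n ≤ n' := by rw [hn'def]; split_ifs <;> omega
    have hdm : dist (x m) (x m') ≤ ε / 4 := by
      rw [hm'def]; split_ifs with h
      · simp; positivity
      · exact (hK m (le_trans (le_max_right _ _) hm)).le
    have hdn : dist (x n) (x n') ≤ ε / 4 := by
      rw [hn'def]; split_ifs with h
      · simp; positivity
      · exact (hK n (le_trans (le_max_right _ _) hn)).le
    have hdist' : ε' ≤ dist (x m') (x n') := by
      have t1 : dist (x m) (x n) ≤ dist (x m) (x m') + dist (x m') (x n') + dist (x n') (x n) :=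
        dist_triangle4 _ _ _ _
      have t2 : dist (x n') (x n) = dist (x n) (x n') := dist_comm _ _
      rw [hε'def]; linarith
    have hne : m' ≠ n' := by
      intro h
      rw [h, dist_self] at hdist'
      linarith
    rcases lt_or_gt_of_ne hne with h | h
    · exact ⟨n', m', hn'e, hm'e, le_trans (le_max_left _ _) (hm.trans hm'ge), h, hdist'⟩
    · exact ⟨m', n', hm'e, hn'e, le_trans (le_max_left _ _) (hn.trans hn'ge), h,
        by rwa [dist_comm] at hdist'⟩
  choose aa bb haE hbE hNb hba hdab using hpair
  set nn : ℕ → ℕ := bb with hnn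
  have hPex : ∀ k, ∃ m, Even m ∧ nn k < m ∧ ε' ≤ dist (x (nn k)) (x m) :=
    fun k => ⟨aa k, haE k, hba k, hdab k⟩
  set mm : ℕ → ℕ := fun k => Nat.find (hPex k) with hmm
  have hmmE : ∀ k, Even (mm k) := fun k => (Nat.find_spec (hPex k)).1
  have hmmgt : ∀ k, nn k < mm k := fun k => (Nat.find_spec (hPex k)).2.1
  have hmmd : ∀ k, ε' ≤ dist (x (nn k)) (x (mm k)) := fun k => (Nat.find_spec (hPex k)).2.2
  have hnnE : ∀ k, Even (nn k) := hbE
  have hknn : ∀ k, k ≤ nn k := hNb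
  have hgap : ∀ k, nn k + 2 ≤ mm k := by
    intro k
    have h1 := hmmgt k
    obtain ⟨r, hr⟩ := hnnE k
    obtain ⟨s, hs⟩ := hmmE k
    omega
  have hmin : ∀ k, dist (x (nn k)) (x (mm k - 2)) < ε' := by
    intro k
    rcases eq_or_lt_of_le (hgap k) with h | h
    · rw [← h]
      simp only [Nat.add_sub_cancel, dist_self]
      exact hε'
    · have h2 : mm k - 2 < mm k := by omega
      have h3 := Nat.find_min (hPex k) h2
      have heven2 : Even (mm k - 2) := by
        obtain ⟨s, hs⟩ := hmmE k
        exact ⟨s - 1, by omega⟩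
      by_contra hcon
      push_neg at hcon
      exact h3 ⟨heven2, by omega, hcon⟩
  have hkmm : ∀ k, k ≤ mm k := fun k => le_trans (hknn k) (le_of_lt (hmmgt k))
  -- c k := dist (x (nn k)) (x (mm k)) tends to ε'
  have hc_lim : Tendsto (fun k => dist (x (nn k)) (x (mm k))) atTop (nhds ε') := by
    have hub : ∀ k, dist (x (nn k)) (x (mm k)) ≤ ε' + (e (mm k - 2) + e (mm k - 1)) := by
      intro k
      obtain ⟨t, ht⟩ : ∃ t, mm k = t + 2 := ⟨mm k - 2, by have := hgap k; omega⟩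
      have h1 : mm k - 2 = t := by omega
      have h2 : mm k - 1 = t + 1 := by omega
      rw [h1, h2, ht]
      have tri : dist (x (nn k)) (x (t + 2)) ≤
          dist (x (nn k)) (x t) + dist (x t) (x (t + 1)) + dist (x (t + 1)) (x (t + 2)) :=
        dist_triangle4 _ _ _ _
      have := hmin k
      rw [h1] at this
      have e1 : dist (x t) (x (t + 1)) = e t := rfl
      have e2 : dist (x (t + 1)) (x (t + 2)) = e (t + 1) := rfl
      linarith
    have hulim : Tendsto (fun k => ε' + (e (mm k - 2) + e (mm k - 1))) atTop (nhds ε') := by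
      have l1 : Tendsto (fun k => e (mm k - 2)) atTop (nhds 0) :=
        hcompE _ (fun k => by have := hgap k; have := hknn k; omega)
      have l2 : Tendsto (fun k => e (mm k - 1)) atTop (nhds 0) :=
        hcompE _ (fun k => by have := hgap k; have := hknn k; omega)
      simpa using (tendsto_const_nhds (x := ε') (f := atTop)).add (l1.add l2)
    exact tendsto_of_tendsto_of_tendsto_of_le_of_le tendsto_const_nhds hulim hmmd hub
  -- perturbation helper
  have hDlim : ∀ (u v : ℕ → ℕ) (r : ℝ),
      Tendsto (fun k => dist (x (u k)) (x (v k))) atTop (nhds r) → (∀ k, k ≤ v k) →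
      Tendsto (fun k => dist (x (u k)) (x (v k + 1))) atTop (nhds r) := by
    intro u v r h hv
    have hel := hcompE v hv
    have lower : ∀ k, dist (x (u k)) (x (v k)) - e (v k) ≤ dist (x (u k)) (x (v k + 1)) := by
      intro k
      have t1 : dist (x (u k)) (x (v k)) ≤
          dist (x (u k)) (x (v k + 1)) + dist (x (v k + 1)) (x (v k)) := dist_triangle _ _ _
      have t2 : dist (x (v k + 1)) (x (v k)) = e (v k) := dist_comm _ _
      linarith
    have upper : ∀ k, dist (x (u k)) (x (v k + 1)) ≤ dist (x (u k)) (x (v k)) + e (v k) :=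
      fun k => dist_triangle _ _ _
    have l1 : Tendsto (fun k => dist (x (u k)) (x (v k)) - e (v k)) atTop (nhds r) := by
      simpa using h.sub hel
    have l2 : Tendsto (fun k => dist (x (u k)) (x (v k)) + e (v k)) atTop (nhds r) := by
      simpa using h.add hel
    exact tendsto_of_tendsto_of_tendsto_of_le_of_le l1 l2 lower upper
  have hnn1 : ∀ k, k ≤ nn k + 1 := fun k => (hknn k).trans (Nat.le_succ _)
  have hc1 : Tendsto (fun k => dist (x (mm k)) (x (nn k + 1))) atTop (nhds ε') :=
    hDlim mm nn ε' (by simpa [dist_comm] using hc_lim) hknn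
  have hc2 : Tendsto (fun k => dist (x (mm k)) (x (nn k + 1 + 1))) atTop (nhds ε') :=
    hDlim mm (fun k => nn k + 1) ε' hc1 hnn1
  have hc1' : Tendsto (fun k => dist (x (nn k + 1)) (x (mm k))) atTop (nhds ε') := by
    simpa [dist_comm] using hc1
  have hc3 : Tendsto (fun k => dist (x (nn k + 1)) (x (mm k + 1))) atTop (nhds ε') :=
    hDlim (fun k => nn k + 1) mm ε' hc1' hkmm
  have hc3' : Tendsto (fun k => dist (x (mm k + 1)) (x (nn k + 1))) atTop (nhds ε') := by
    simpa [dist_comm] using hc3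
  have hc4 : Tendsto (fun k => dist (x (mm k + 1)) (x (nn k + 1 + 1))) atTop (nhds ε') :=
    hDlim (fun k => mm k + 1) (fun k => nn k + 1) ε' hc3' hnn1
  -- identify S, T values with A
  have hSA : ∀ k, S (x (mm k)) = A (mm k) := by
    intro k
    obtain ⟨s, hs⟩ := hmmE k
    have h2 : mm k = 2 * s := by omega
    rw [h2]; exact (hAeven s).symm
  have hTA : ∀ k, T (x (nn k + 1)) = A (nn k + 1) := by
    intro k
    obtain ⟨s, hs⟩ := hnnE k
    have h2 : nn k = 2 * s := by omega
    rw [h2]; exact (hAodd s).symm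
  set dl : ℕ → ℝ := fun k => setDelta (A (mm k)) (A (nn k + 1)) with hdl
  set Mk : ℕ → ℝ := fun k => genM S T (x (mm k)) (x (nn k + 1)) with hMk
  have hdl0 : ∀ k, 0 ≤ dl k := fun k =>
    setDelta_nonneg (hAb _) (hAb _) (hxmem (mm k)) (hxmem (nn k + 1))
  have hMk_low : ∀ k, dist (x (mm k)) (x (nn k + 1)) ≤ Mk k := by
    intro k
    show dist (x (mm k)) (x (nn k + 1)) ≤ genM S T (x (mm k)) (x (nn k + 1))
    exact le_max_of_le_left (le_max_left _ _)
  have hMk0 : ∀ k, 0 ≤ Mk k := fun k => dist_nonneg.trans (hMk_low k)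
  have hp_mm := hcompP mm hkmm
  have hp_nn1 := hcompP (fun k => nn k + 1) hnn1
  -- the limit of dl
  have hdl_lim : Tendsto dl atTop (nhds ε') := by
    have hlow : ∀ k, dist (x (mm k + 1)) (x (nn k + 1 + 1)) ≤ dl k := fun k =>
      dist_le_setDelta (hAb _) (hAb _) (hxmem (mm k)) (hxmem (nn k + 1))
    have hup : ∀ k, dl k ≤ p (mm k) + (dist (x (mm k)) (x (nn k + 1)) + p (nn k + 1)) := by
      intro k
      have h1 : dl k ≤ setDelta {x (mm k)} (A (mm k)) + setDelta {x (mm k)} (A (nn k + 1)) :=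
        setDelta_le_add (hAne _) (hAne _) (hAb _) (hAb _) _
      have h2 : setDelta {x (mm k)} (A (nn k + 1)) ≤
          dist (x (mm k)) (x (nn k + 1)) + setDelta {x (nn k + 1)} (A (nn k + 1)) :=
        deltaSingleton_le_add (hAne _) (hAb _) _ _
      have h3 : setDelta {x (mm k)} (A (mm k)) = p (mm k) := rfl
      have h4 : setDelta {x (nn k + 1)} (A (nn k + 1)) = p (nn k + 1) := rfl
      linarith
    have hup_lim : Tendsto (fun k => p (mm k) + (dist (x (mm k)) (x (nn k + 1)) + p (nn k + 1)))
        atTop (nhds ε') := by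
      simpa using hp_mm.add (hc1.add hp_nn1)
    exact tendsto_of_tendsto_of_tendsto_of_le_of_le hc4 hup_lim hlow hup
  -- the limit of Mk
  have hMk_lim : Tendsto Mk atTop (nhds ε') := by
    have hup : ∀ k, Mk k ≤ max (max (dist (x (mm k)) (x (nn k + 1))) (p (mm k)))
        (max (p (nn k + 1))
          ((dist (x (mm k)) (x (nn k + 1 + 1)) + dist (x (nn k + 1)) (x (mm k + 1))) / 2)) := by
      intro k
      have hD1 : setInfDist {x (mm k)} (A (nn k + 1)) ≤ dist (x (mm k)) (x (nn k + 1 + 1)) :=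
        setInfDist_le rfl (hxmem (nn k + 1))
      have hD2 : setInfDist {x (nn k + 1)} (A (mm k)) ≤ dist (x (nn k + 1)) (x (mm k + 1)) :=
        setInfDist_le rfl (hxmem (mm k))
      have h3 : setDelta {x (mm k)} (A (mm k)) = p (mm k) := rfl
      have h4 : setDelta {x (nn k + 1)} (A (nn k + 1)) = p (nn k + 1) := rfl
      show genM S T (x (mm k)) (x (nn k + 1)) ≤ _
      unfold genM
      rw [hSA k, hTA k, h3, h4]
      gcongr
    have hup_lim : Tendsto (fun k => max (max (dist (x (mm k)) (x (nn k + 1))) (p (mm k)))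
        (max (p (nn k + 1))
          ((dist (x (mm k)) (x (nn k + 1 + 1)) + dist (x (nn k + 1)) (x (mm k + 1))) / 2)))
        atTop (nhds ε') := by
      have lav : Tendsto (fun k =>
          (dist (x (mm k)) (x (nn k + 1 + 1)) + dist (x (nn k + 1)) (x (mm k + 1))) / 2)
          atTop (nhds ε') := by
        have := (hc2.add hc3).div_const 2
        simpa [add_self_div_two] using this
      have := (hc1.max hp_mm).max (hp_nn1.max lav)
      simpa [max_eq_left hε'.le, max_eq_right hε'.le] using this
    exact tendsto_of_tendsto_of_tendsto_of_le_of_le hc1 hup_lim hMk_low hup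
  -- contraction along the pairs
  have hck : ∀ k, ψ (dl k) ≤ ψ (Mk k) - φ (Mk k) := by
    intro k
    have hcomp : x (mm k) ≤ x (nn k + 1) ∨ x (nn k + 1) ≤ x (mm k) := by
      rcases le_total (mm k) (nn k + 1) with h | h
      · exact Or.inr (hchain _ _ h)
      · exact Or.inl (hchain _ _ h)
    have h := hcontr (x (mm k)) (x (nn k + 1)) hcomp
    rw [hSA k, hTA k] at h
    exact h
  -- boundedness and Bolzano–Weierstrass
  obtain ⟨C1, hC1⟩ := hdl_lim.bddAbove_range
  obtain ⟨C2, hC2⟩ := hMk_lim.bddAbove_range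
  set C : ℝ := max C1 C2 with hC
  have hdlC : ∀ k, dl k ≤ C := fun k => le_trans (hC1 ⟨k, rfl⟩) (le_max_left _ _)
  have hMkC : ∀ k, Mk k ≤ C := fun k => le_trans (hC2 ⟨k, rfl⟩) (le_max_right _ _)
  have hmemδ : ∀ k, ψ (dl k) ∈ Set.Icc (0 : ℝ) (ψ C) := fun k =>
    ⟨hψ.1 _ (hdl0 k), hψ.2.1 _ _ (hdl0 k) (hdlC k)⟩
  have hmemM : ∀ k, ψ (Mk k) ∈ Set.Icc (0 : ℝ) (ψ C) := fun k =>
    ⟨hψ.1 _ (hMk0 k), hψ.2.1 _ _ (hMk0 k) (hMkC k)⟩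
  obtain ⟨la, -, g1, hg1, hla⟩ :=
    tendsto_subseq_of_bounded (Metric.isBounded_Icc (0 : ℝ) (ψ C)) hmemδ
  obtain ⟨lb, -, g2, hg2, hlb⟩ :=
    tendsto_subseq_of_bounded (Metric.isBounded_Icc (0 : ℝ) (ψ C)) (fun k => hmemM (g1 k))
  have hg : StrictMono (g1 ∘ g2) := hg1.comp hg2
  have hla' : Tendsto (fun j => ψ (dl (g1 (g2 j)))) atTop (nhds la) := by
    have := hla.comp hg2.tendsto_atTop
    simpa [Function.comp_def] using this
  have hlb' : Tendsto (fun j => ψ (Mk (g1 (g2 j)))) atTop (nhds lb) := by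
    simpa [Function.comp_def] using hlb
  have hδg : Tendsto (fun j => dl (g1 (g2 j))) atTop (nhds ε') := by
    have := hdl_lim.comp hg.tendsto_atTop
    simpa [Function.comp_def] using this
  have hMg : Tendsto (fun j => Mk (g1 (g2 j))) atTop (nhds ε') := by
    have := hMk_lim.comp hg.tendsto_atTop
    simpa [Function.comp_def] using this
  have hlab : la = lb :=
    hψ.2.2 (fun j => dl (g1 (g2 j))) (fun j => Mk (g1 (g2 j))) ε' la lb
      (fun j => hdl0 _) (fun j => hMk0 _) hδg hMg hla' hlb'
  have hφlim : Tendsto (fun j => φ (Mk (g1 (g2 j)))) atTop (nhds 0) := by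
    have hub : ∀ j, φ (Mk (g1 (g2 j))) ≤ ψ (Mk (g1 (g2 j))) - ψ (dl (g1 (g2 j))) := by
      intro j
      have := hck (g1 (g2 j))
      linarith
    have hlim : Tendsto (fun j => ψ (Mk (g1 (g2 j))) - ψ (dl (g1 (g2 j)))) atTop (nhds 0) := by
      have := hlb'.sub hla'
      rw [← hlab] at this
      simpa using this
    exact tendsto_of_tendsto_of_tendsto_of_le_of_le tendsto_const_nhds hlim
      (fun j => hφ.1 _ (hMk0 _)) hub
  have hM0 : Tendsto (fun j => Mk (g1 (g2 j))) atTop (nhds 0) :=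
    hφ.2 _ (fun j => hMk0 _) hφlim
  have : ε' = 0 := tendsto_nhds_unique hMg hM0
  linarith
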